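/- Let R be a complete DVR with uniformizer t, S = R[d]/(d(d−t)), and M an S-module that is finitely generated and free over R such that d acts as 0 on M/tM. Then d = t·e for an idempotent endomorphism e of M, and M decomposes as a direct sum of S-submodules M = (1−e)M ⊕ eM, where d acts as 0 on (1−e)M and as t on eM. -/

import Mathlib

/-- Let `R` be a complete DVR with uniformizer `t`, and `M` an
`S = R[d]/(d(d−t))`-module which is finitely generated free over `R` (so `M` carries
an `R`-linear `d` with `d(d − t) = 0`, i.e. `d ∘ d = t • d`), such that `d` acts as `0`
on `M/tM` (i.e. `dM ⊆ tM`).  Then `d = t·e` for an idempotent endomorphism `e` of `M`,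
and `M = (1−e)M ⊕ eM` as `S`-modules, `d` acting by `0` on `(1−e)M` and by `t` on `eM`. -/
theorem stmt5 (R : Type*) [CommRing R] [IsDomain R] [IsDiscreteValuationRing R]
    [IsLocalRing R] [IsAdicComplete (IsLocalRing.maximalIdeal R) R]
    (t : R) (ht : Irreducible t)
    (M : Type*) [AddCommGroup M] [Module R M] [Module.Free R M] [Module.Finite R M]
    (d : M →ₗ[R] M) (hd : d ∘ₗ d = t • d)
    (hdt : ∀ m : M, ∃ m' : M, d m = t • m') :
    ∃ e : M →ₗ[R] M,
      e ∘ₗ e = e ∧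
      d = t • e ∧
      IsCompl (LinearMap.range (LinearMap.id - e)) (LinearMap.range e) ∧
      (∀ m : M, d (m - e m) = 0) ∧
      (∀ m : M, d (e m) = t • e m) := by
  have htinj : Function.Injective (fun m : M => t • m) :=
    smul_right_injective M ht.ne_zero
  -- define e
  let e : M →ₗ[R] M :=
    { toFun := fun m => Classical.choose (hdt m)
      map_add' := fun m m' => by
        apply htinj
        simp only
        rw [smul_add, ← Classical.choose_spec (hdt m), ← Classical.choose_spec (hdt m'),
          ← Classical.choose_spec (hdt (m + m')), map_add]
      map_smul' := fun r m => by
        apply htinj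
        simp only [RingHom.id_apply]
        rw [← Classical.choose_spec (hdt (r • m)), map_smul,
          smul_comm t r, ← Classical.choose_spec (hdt m)] }
  have he : ∀ m : M, d m = t • e m := fun m => Classical.choose_spec (hdt m)
  have hde : d = t • e := by ext m; rw [he m]; rfl
  have hidem : e ∘ₗ e = e := by
    ext m
    apply htinj; apply htinj
    simp only
    calc t • t • e (e m) = t • d (e m) := by rw [he]
      _ = d (d m) := by rw [he m, map_smul]
      _ = t • d m := by
          have := congrFun (congrArg DFunLike.coe hd) m
          simpa using this
      _ = t • t • e m := by rw [he m]
  have hee : ∀ m : M, e (e m) = e m := fun m =>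
    congrFun (congrArg DFunLike.coe hidem) m
  refine ⟨e, hidem, hde, ?_, ?_, ?_⟩
  · constructor
    · rw [disjoint_iff]
      ext x
      simp only [Submodule.mem_inf, LinearMap.mem_range, Submodule.mem_bot]
      constructor
      · rintro ⟨⟨a, ha⟩, ⟨b, hb⟩⟩
        have h1 : e x = 0 := by
          rw [← ha]; simp [hee a]
        have h2 : e x = x := by rw [← hb, hee b, hb]
        rw [← h2, h1]
      · rintro rfl; exact ⟨⟨0, by simp⟩, ⟨0, by simp⟩⟩
    · rw [codisjoint_iff, eq_top_iff]
      intro x _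
      have : x = (x - e x) + e x := by abel
      rw [this]
      exact Submodule.add_mem_sup ⟨x, by simp [sub_eq_add_neg]⟩ ⟨x, rfl⟩
  · intro m
    rw [map_sub, he m, he (e m), hee m, sub_self]
  · intro m
    rw [he (e m), hee m]
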